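/- Explicit coefficient formula: D_n(x|a_1,…,a_r) = ∑_{j=0}^n ( ∑_{l=j}^n C(n,l) S_1(l,j) D_{n-l}(a_1,…,a_r) ) x^j, i.e., the coefficient of x^j in D_n(x|a_1,…,a_r) equals ∑_{l=j}^n C(n,l) S_1(l,j) D_{n-l}(a_1,…,a_r). -/

import Mathlib

open Finset PowerSeries

/-- Exponential generating function: `∑ f n * t^n / n!`. -/
noncomputable def egf (f : ℕ → ℚ) : PowerSeries ℚ :=
  PowerSeries.mk fun n => f n / n.factorial

/-- The formal power series `log(1+t) = ∑_{m≥1} (-1)^{m-1} t^m / m`. -/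
noncomputable def log1p : PowerSeries ℚ :=
  PowerSeries.mk fun n => if n = 0 then 0 else (-1) ^ (n - 1) / n

/-- Formal exponential composition: for `f` with zero constant term this is
`exp(f) = ∑_k f^k / k!` (the sum in each coefficient is finite). -/
noncomputable def expPS (f : PowerSeries ℚ) : PowerSeries ℚ :=
  PowerSeries.mk fun n =>
    ∑ k ∈ Finset.range (n + 1), (PowerSeries.coeff n (f ^ k)) / k.factorial

/-- `(1+t)^a := exp(a · log(1+t))` as a formal power series. -/
noncomputable def onePow (a : ℚ) : PowerSeries ℚ := expPS (PowerSeries.C a * log1p)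

/-- `e^{a t} = ∑ a^n t^n / n!`. -/
noncomputable def expAt (a : ℚ) : PowerSeries ℚ :=
  PowerSeries.mk fun n => a ^ n / n.factorial

/-- Falling factorial `(x)_n = x(x-1)⋯(x-n+1)`. -/
noncomputable def ffall (x : ℚ) (n : ℕ) : ℚ := ∏ i ∈ Finset.range n, (x - i)

lemma constantCoeff_log1p : constantCoeff log1p = 0 := by
  simp [log1p, ← coeff_zero_eq_constantCoeff]

lemma coeff_pow_eq_zero {f : PowerSeries ℚ} (hf : constantCoeff f = 0) {q k : ℕ}
    (h : q < k) : coeff q (f ^ k) = 0 := by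
  obtain ⟨g, hg⟩ : (X : PowerSeries ℚ) ^ k ∣ f ^ k := pow_dvd_pow_of_dvd (X_dvd_iff.2 hf) k
  rw [hg, coeff_X_pow_mul', if_neg (by omega)]

lemma coeff_mul_pow_eq_zero {f g : PowerSeries ℚ} (hf : constantCoeff f = 0) {q k : ℕ}
    (h : q < k) : coeff q (g * f ^ k) = 0 := by
  rw [coeff_mul]
  refine Finset.sum_eq_zero fun p hp => ?_
  rw [Finset.HasAntidiagonal.mem_antidiagonal] at hp
  rw [coeff_pow_eq_zero hf (by omega : p.2 < k), mul_zero]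

lemma dlog1p : d⁄dX ℚ log1p = PowerSeries.mk fun n => (-1) ^ n := by
  ext n
  rw [coeff_derivative, coeff_mk, log1p, coeff_mk, if_neg (Nat.succ_ne_zero n)]
  have : ((n+1 : ℕ) : ℚ) ≠ 0 := by positivity
  field_simp
  simp only [Nat.add_sub_cancel]; push_cast; ring

lemma one_add_X_mul_dlog1p : (1 + X) * d⁄dX ℚ log1p = 1 := by
  rw [dlog1p, add_mul, one_mul]
  ext n
  cases n with
  | zero => simp [coeff_mk]
  | succ m =>
    rw [map_add, coeff_mk, coeff_succ_X_mul, coeff_mk, coeff_one, if_neg (Nat.succ_ne_zero m)]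
    ring_nf

lemma one_add_X_mul_dF (x : ℚ) :
    (1 + X) * d⁄dX ℚ (C x * log1p) = C x := by
  have : d⁄dX ℚ (C x * log1p) = C x * d⁄dX ℚ log1p := by
    rw [Derivation.leibniz, derivative_C, smul_zero, add_zero, smul_eq_mul]
  rw [this, mul_left_comm, one_add_X_mul_dlog1p, mul_one]

/-- The auxiliary sum `A x n = ∑_{m≤n} coeff_n (F' F^m)/m!` where `F = C x * log1p`. -/
noncomputable def Aaux (x : ℚ) (n : ℕ) : ℚ :=
  ∑ m ∈ Finset.range (n + 1),
    coeff n (d⁄dX ℚ (C x * log1p) * (C x * log1p) ^ m) / m.factorial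

lemma constantCoeff_F (x : ℚ) : constantCoeff (C x * log1p) = 0 := by
  rw [map_mul, constantCoeff_log1p, mul_zero]

lemma coeff_onePow_def (x : ℚ) (n : ℕ) : coeff n (onePow x) =
    ∑ k ∈ Finset.range (n + 1), coeff n ((C x * log1p) ^ k) / k.factorial := by
  rw [onePow, expPS, coeff_mk]

lemma rec1 (x : ℚ) (n : ℕ) :
    ((n : ℚ) + 1) * coeff (n + 1) (onePow x) = Aaux x n := by
  set F := C x * log1p with hF
  rw [coeff_onePow_def, Finset.mul_sum, Finset.sum_range_succ']
  have h0 : ((n : ℚ) + 1) * (coeff (n + 1) (F ^ 0) / (Nat.factorial 0 : ℚ)) = 0 := by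
    simp
  rw [h0, add_zero]
  unfold Aaux
  refine Finset.sum_congr rfl fun i _ => ?_
  have hl : d⁄dX ℚ (F ^ (i + 1)) = (i + 1) • (F ^ i • d⁄dX ℚ F) := by
    rw [Derivation.leibniz_pow]; simp
  have key : coeff (n + 1) (F ^ (i + 1)) * ((n : ℚ) + 1)
      = ((i : ℚ) + 1) * coeff n (d⁄dX ℚ F * F ^ i) := by
    rw [← coeff_derivative, hl, map_nsmul, nsmul_eq_mul, smul_eq_mul, mul_comm (F ^ i)]
    push_cast
    ring
  have hfac : (((i + 1).factorial : ℕ) : ℚ) = ((i : ℚ) + 1) * (i.factorial : ℚ) := by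
    rw [Nat.factorial_succ]; push_cast; ring
  have hne : ((i : ℚ) + 1) ≠ 0 := by positivity
  rw [← mul_div_assoc, mul_comm ((n : ℚ) + 1), key, hfac, mul_div_mul_left _ _ hne]

lemma rec2 (x : ℚ) (n : ℕ) :
    Aaux x (n + 1) = x * coeff (n + 1) (onePow x) - Aaux x n := by
  set F := C x * log1p with hF
  set dF := d⁄dX ℚ F with hdF
  have hsub : dF = C x - X * dF := by
    refine (eq_sub_of_add_eq ?_)
    have := one_add_X_mul_dF x
    rw [add_mul, one_mul] at this
    exact this
  have hterm : ∀ m, coeff (n + 1) (dF * F ^ m)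
      = x * coeff (n + 1) (F ^ m) - coeff n (dF * F ^ m) := by
    intro m
    conv_lhs => rw [hsub]
    rw [sub_mul, map_sub, mul_assoc, coeff_succ_X_mul, coeff_C_mul]
  unfold Aaux
  rw [← hF, ← hdF]
  calc ∑ m ∈ Finset.range (n + 1 + 1), coeff (n + 1) (dF * F ^ m) / (m.factorial : ℚ)
      = ∑ m ∈ Finset.range (n + 2), (x * coeff (n + 1) (F ^ m) / (m.factorial : ℚ)
          - coeff n (dF * F ^ m) / (m.factorial : ℚ)) := by
        refine Finset.sum_congr rfl fun m _ => ?_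
        rw [hterm m, sub_div]
    _ = x * (∑ m ∈ Finset.range (n + 2), coeff (n + 1) (F ^ m) / (m.factorial : ℚ))
          - ∑ m ∈ Finset.range (n + 2), coeff n (dF * F ^ m) / (m.factorial : ℚ) := by
        rw [Finset.sum_sub_distrib, Finset.mul_sum]
        congr 1
        refine Finset.sum_congr rfl fun m _ => ?_
        rw [mul_div_assoc]
    _ = x * coeff (n + 1) (onePow x) - Aaux x n := by
        rw [coeff_onePow_def, ← hF]
        congr 1
        rw [Finset.sum_range_succ, Aaux, ← hF, ← hdF,
          coeff_mul_pow_eq_zero (constantCoeff_F x) (Nat.lt_succ_self n), zero_div, add_zero]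

lemma Aaux_eq (x : ℚ) (n : ℕ) : Aaux x n = (x - n) * coeff n (onePow x) := by
  induction n with
  | zero =>
    have h1 : coeff 0 (onePow x) = 1 := by
      rw [coeff_onePow_def]
      simp
    have h2 : Aaux x 0 = x := by
      rw [Aaux]
      have : d⁄dX ℚ (C x * log1p) = C x * d⁄dX ℚ log1p := by
        rw [Derivation.leibniz, derivative_C, smul_zero, add_zero, smul_eq_mul]
      simp [this, dlog1p, coeff_C_mul, coeff_mk]
    rw [h1, h2]
    simp
  | succ m ih =>
    have h1 := rec1 x m
    have h2 := rec2 x m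
    rw [ih] at h1
    rw [h2, ih, ← h1]
    push_cast
    ring

lemma coeff_onePow (x : ℚ) (l : ℕ) :
    coeff l (onePow x) = ffall x l / (l.factorial : ℚ) := by
  induction l with
  | zero =>
    rw [coeff_onePow_def]
    simp [ffall]
  | succ m ih =>
    have h1 := rec1 x m
    rw [Aaux_eq, ih] at h1
    have hne : ((m : ℚ) + 1) ≠ 0 := by positivity
    have hfac : (((m + 1).factorial : ℕ) : ℚ) = ((m : ℚ) + 1) * (m.factorial : ℚ) := by
      rw [Nat.factorial_succ]; push_cast; ring
    have hfne : ((m.factorial : ℕ) : ℚ) ≠ 0 := by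
      exact_mod_cast Nat.cast_ne_zero.2 m.factorial_ne_zero
    have : coeff (m + 1) (onePow x) = (x - m) * (ffall x m / (m.factorial : ℚ)) / ((m : ℚ) + 1) := by
      field_simp at h1 ⊢
      linarith [h1]
    rw [this, show ffall x (m + 1) = ffall x m * (x - m) from by
      rw [ffall, ffall, Finset.prod_range_succ], hfac]
    field_simp


lemma onePow_zero : onePow 0 = 1 := by
  ext l
  rw [coeff_onePow, coeff_one]
  cases l with
  | zero => simp [ffall]
  | succ m =>
    rw [if_neg (Nat.succ_ne_zero m)]
    have : ffall 0 (m + 1) = 0 := by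
      rw [ffall]
      exact Finset.prod_eq_zero (Finset.mem_range.2 (Nat.succ_pos m)) (by simp)
    rw [this, zero_div]

lemma onePow_sub_one_ne {a : ℚ} (ha : a ≠ 0) : onePow a - 1 ≠ 0 := by
  intro h
  have : coeff 1 (onePow a - 1) = 0 := by rw [h, map_zero]
  rw [map_sub, coeff_onePow, coeff_one, if_neg one_ne_zero] at this
  simp [ffall] at this
  exact ha this

theorem stmt18 (r : ℕ) (a : Fin r → ℚ) (ha : ∀ j, a j ≠ 0) (D : ℕ → Polynomial ℚ)
    (hD : ∀ x : ℚ, (∏ j, (onePow (a j) - 1)) * egf (fun n => (D n).eval x) = log1p ^ r * onePow x)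
    (S1 : ℕ → ℕ → ℚ) (hS1 : ∀ (l : ℕ) (x : ℚ), ffall x l = ∑ j ∈ Finset.range (l + 1), S1 l j * x ^ j)
    (n j : ℕ) :
    (D n).coeff j = ∑ l ∈ Finset.Icc j n, (n.choose l : ℚ) * S1 l j * (D (n - l)).eval 0 := by
  have hP : (∏ j, (onePow (a j) - 1)) ≠ 0 :=
    Finset.prod_ne_zero_iff.2 fun i _ => onePow_sub_one_ne (ha i)
  have key : ∀ x : ℚ, egf (fun n => (D n).eval x)
      = onePow x * egf (fun n => (D n).eval 0) := by
    intro x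
    have h0 := hD 0
    rw [onePow_zero, mul_one] at h0
    refine mul_left_cancel₀ hP ?_
    rw [hD x, ← h0]
    ring
  -- evaluate coefficient n
  have heval : ∀ x : ℚ, (D n).eval x
      = ∑ l ∈ Finset.range (n + 1), (n.choose l : ℚ) * ffall x l * (D (n - l)).eval 0 := by
    intro x
    have h := congrArg (coeff n) (key x)
    rw [egf, coeff_mk, coeff_mul, Finset.Nat.sum_antidiagonal_eq_sum_range_succ_mk] at h
    have hfne : ((n.factorial : ℕ) : ℚ) ≠ 0 := Nat.cast_ne_zero.2 n.factorial_ne_zero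
    have h2 : (D n).eval x = (n.factorial : ℚ) *
        ∑ l ∈ Finset.range (n + 1),
          coeff l (onePow x) * coeff (n - l) (egf fun m => (D m).eval 0) := by
      rw [← h]
      field_simp
    rw [h2, Finset.mul_sum]
    refine Finset.sum_congr rfl fun l hl => ?_
    have hln : l ≤ n := Nat.lt_succ_iff.1 (Finset.mem_range.1 hl)
    rw [coeff_onePow, egf, coeff_mk, Nat.cast_choose ℚ hln]
    have h3 : ((l.factorial : ℕ) : ℚ) ≠ 0 := Nat.cast_ne_zero.2 l.factorial_ne_zero
    have h4 : (((n - l).factorial : ℕ) : ℚ) ≠ 0 := Nat.cast_ne_zero.2 (n - l).factorial_ne_zero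
    field_simp
  -- the explicit polynomial
  set Q : Polynomial ℚ := ∑ l ∈ Finset.range (n + 1), ∑ j' ∈ Finset.range (l + 1),
      Polynomial.C ((n.choose l : ℚ) * S1 l j' * (D (n - l)).eval 0) * Polynomial.X ^ j'
    with hQ
  have hDQ : D n = Q := by
    refine Polynomial.funext fun x => ?_
    rw [heval x, hQ]
    rw [Polynomial.eval_finset_sum]
    refine Finset.sum_congr rfl fun l _ => ?_
    rw [Polynomial.eval_finset_sum]
    simp only [Polynomial.eval_mul, Polynomial.eval_C, Polynomial.eval_pow, Polynomial.eval_X]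
    rw [hS1 l x, Finset.mul_sum, Finset.sum_mul]
    exact Finset.sum_congr rfl fun j' _ => by ring
  rw [hDQ, hQ, Polynomial.finset_sum_coeff]
  have hinner : ∀ l ∈ Finset.range (n + 1),
      (∑ j' ∈ Finset.range (l + 1),
        Polynomial.C ((n.choose l : ℚ) * S1 l j' * (D (n - l)).eval 0) * Polynomial.X ^ j').coeff j
      = if j ≤ l then (n.choose l : ℚ) * S1 l j * (D (n - l)).eval 0 else 0 := by
    intro l _
    rw [Polynomial.finset_sum_coeff]
    simp only [Polynomial.coeff_C_mul, Polynomial.coeff_X_pow, mul_ite, mul_one, mul_zero]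
    rw [Finset.sum_ite_eq (Finset.range (l + 1)) j
      (fun j' => (n.choose l : ℚ) * S1 l j' * (D (n - l)).eval 0)]
    simp [Nat.lt_succ_iff]
  rw [Finset.sum_congr rfl hinner, Finset.sum_ite, Finset.sum_const_zero, add_zero]
  refine Finset.sum_congr ?_ fun l _ => rfl
  ext l
  simp only [Finset.mem_filter, Finset.mem_range, Finset.mem_Icc]
  omega
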